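/- Let 0 < μ ≤ L, let f be μ-strongly convex with L-Lipschitz gradient on ℝⁿ, with minimizer x⋆, and let 0 < s ≤ μ/(16L²). Then the iterates of the symplectic Euler scheme for the high-resolution heavy-ball ODE satisfy, for every k ≥ 0, f(x_k) − f(x⋆) ≤ ( (3 + 8√(μs) + 8μs)sL/(1 + √(μs))² + 2μ/L + (1 + √(μs))/2 ) · L‖x₀ − x⋆‖² / (1 + √(μs)/4)^k. -/

import Mathlib

open scoped RealInnerProductSpace

lemma sq_norm_add_le' {n : ℕ} (u w : EuclideanSpace ℝ (Fin n)) :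
    ‖u + w‖ ^ 2 ≤ 2 * ‖u‖ ^ 2 + 2 * ‖w‖ ^ 2 := by
  have h := norm_add_le u w
  nlinarith [norm_nonneg (u + w), norm_nonneg u, norm_nonneg w, sq_nonneg (‖u‖ - ‖w‖)]

lemma descent_lemma {n : ℕ} {L : ℝ} (hL : 0 ≤ L)
    (f : EuclideanSpace ℝ (Fin n) → ℝ) (f' : EuclideanSpace ℝ (Fin n) → EuclideanSpace ℝ (Fin n))
    (hgrad : ∀ z, HasGradientAt f (f' z) z)
    (hLip : ∀ z w, ‖f' z - f' w‖ ≤ L * ‖z - w‖)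
    (z w : EuclideanSpace ℝ (Fin n)) :
    f w ≤ f z + ⟪f' z, w - z⟫ + L / 2 * ‖w - z‖ ^ 2 := by
  set c : ℝ → EuclideanSpace ℝ (Fin n) := fun t => z + t • (w - z) with hc
  have hcder : ∀ t : ℝ, HasDerivAt c (w - z) t := by
    intro t
    show HasDerivAt (fun t => z + t • (w - z)) _ t
    simpa using ((hasDerivAt_id t).smul_const (w - z)).const_add z
  have hφ : ∀ t : ℝ, HasDerivAt (fun t => f (c t)) ⟪f' (c t), w - z⟫ t := by
    intro t
    have h1 : HasFDerivAt f (InnerProductSpace.toDual ℝ _ (f' (c t))) (c t) := hgrad (c t)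
    have h2 := h1.comp_hasDerivAt t (hcder t)
    simp only [InnerProductSpace.toDual_apply_apply] at h2
    exact h2
  set ψ : ℝ → ℝ := fun t => f (c t) - t * ⟪f' z, w - z⟫ - L / 2 * t ^ 2 * ‖w - z‖ ^ 2 with hψ
  have hψder : ∀ t : ℝ,
      HasDerivAt ψ (⟪f' (c t), w - z⟫ - ⟪f' z, w - z⟫ - L * t * ‖w - z‖ ^ 2) t := by
    intro t
    have h2 : HasDerivAt (fun t : ℝ => t * ⟪f' z, w - z⟫) ⟪f' z, w - z⟫ t := by
      simpa using (hasDerivAt_id t).mul_const (⟪f' z, w - z⟫ : ℝ)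
    have h3 : HasDerivAt (fun t : ℝ => L / 2 * t ^ 2 * ‖w - z‖ ^ 2)
        (L * t * ‖w - z‖ ^ 2) t := by
      have h4 := ((hasDerivAt_pow 2 t).const_mul (L / 2)).mul_const (‖w - z‖ ^ 2)
      refine h4.congr_deriv ?_
      push_cast
      ring
    exact ((hφ t).sub h2).sub h3
  have key : ψ 1 ≤ ψ 0 := by
    have hanti : AntitoneOn ψ (Set.Icc (0 : ℝ) 1) := by
      apply antitoneOn_of_deriv_nonpos (convex_Icc 0 1)
      · exact fun t _ => ((hψder t).differentiableAt).continuousAt.continuousWithinAt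
      · exact fun t _ => ((hψder t).differentiableAt).differentiableWithinAt
      · intro t ht
        rw [interior_Icc] at ht
        rw [(hψder t).deriv]
        have h4 : ⟪f' (c t) - f' z, w - z⟫ ≤ ‖f' (c t) - f' z‖ * ‖w - z‖ :=
          real_inner_le_norm _ _
        have h5 : ‖f' (c t) - f' z‖ ≤ L * (t * ‖w - z‖) := by
          have h6 := hLip (c t) z
          have h7 : c t - z = t • (w - z) := by
            show z + t • (w - z) - z = t • (w - z)
            module
          rw [h7, norm_smul, Real.norm_eq_abs, abs_of_pos ht.1] at h6
          linarith [h6]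
        have h6 : ⟪f' (c t) - f' z, w - z⟫ = ⟪f' (c t), w - z⟫ - ⟪f' z, w - z⟫ :=
          inner_sub_left _ _ _
        nlinarith [norm_nonneg (w - z), ht.1.le,
          mul_le_mul_of_nonneg_right h5 (norm_nonneg (w - z))]
    exact hanti (Set.mem_Icc.2 ⟨le_refl 0, zero_le_one⟩)
      (Set.mem_Icc.2 ⟨zero_le_one, le_refl 1⟩) zero_le_one
  have hc1 : c 1 = w := by rw [hc]; simp
  have hc0 : c 0 = z := by rw [hc]; simp
  rw [hψ] at key
  simp only [hc1, hc0] at key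
  nlinarith [key]

lemma grad_min_zero {n : ℕ}
    (f : EuclideanSpace ℝ (Fin n) → ℝ) (f' : EuclideanSpace ℝ (Fin n) → EuclideanSpace ℝ (Fin n))
    (hgrad : ∀ z, HasGradientAt f (f' z) z)
    (xstar : EuclideanSpace ℝ (Fin n)) (hmin : ∀ z, f xstar ≤ f z) :
    f' xstar = 0 := by
  have hloc : IsLocalMin f xstar := Filter.Eventually.of_forall hmin
  have h0 : (InnerProductSpace.toDual ℝ _ (f' xstar) : _) = 0 :=
    hloc.hasFDerivAt_eq_zero (hgrad xstar)
  have h1 : ⟪f' xstar, f' xstar⟫ = 0 := by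
    have := congrArg (fun φ => φ (f' xstar)) h0
    simpa [InnerProductSpace.toDual_apply_apply] using this
  exact inner_self_eq_zero.mp h1

lemma grad_sq_le {n : ℕ} {L : ℝ} (hL : 0 < L)
    (f : EuclideanSpace ℝ (Fin n) → ℝ) (f' : EuclideanSpace ℝ (Fin n) → EuclideanSpace ℝ (Fin n))
    (hgrad : ∀ z, HasGradientAt f (f' z) z)
    (hLip : ∀ z w, ‖f' z - f' w‖ ≤ L * ‖z - w‖)
    (xstar : EuclideanSpace ℝ (Fin n)) (hmin : ∀ z, f xstar ≤ f z)
    (z : EuclideanSpace ℝ (Fin n)) :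
    ‖f' z‖ ^ 2 ≤ 2 * L * (f z - f xstar) := by
  have h := descent_lemma hL.le f f' hgrad hLip z (z - (1 / L) • f' z)
  have h2 : z - (1 / L) • f' z - z = -((1 / L) • f' z) := by abel
  rw [h2] at h
  have h3 : ⟪f' z, -((1 / L) • f' z)⟫ = -(1 / L) * ‖f' z‖ ^ 2 := by
    rw [inner_neg_right, real_inner_smul_right, real_inner_self_eq_norm_sq]
    ring
  have h4 : ‖-((1 / L) • f' z)‖ ^ 2 = (1 / L) ^ 2 * ‖f' z‖ ^ 2 := by
    rw [norm_neg, norm_smul, mul_pow, Real.norm_eq_abs, sq_abs]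
  rw [h3, h4] at h
  have h5 := hmin (z - (1 / L) • f' z)
  have hL' : L ≠ 0 := ne_of_gt hL
  have : f xstar ≤ f z - 1 / (2 * L) * ‖f' z‖ ^ 2 := by
    calc f xstar ≤ f (z - (1 / L) • f' z) := h5
    _ ≤ f z + -(1 / L) * ‖f' z‖ ^ 2 + L / 2 * ((1 / L) ^ 2 * ‖f' z‖ ^ 2) := h
    _ = f z - 1 / (2 * L) * ‖f' z‖ ^ 2 := by field_simp; ring
  have h7 : 1 / (2 * L) * ‖f' z‖ ^ 2 ≤ f z - f xstar := by linarith
  have h8 := mul_le_mul_of_nonneg_left h7 (by positivity : (0:ℝ) ≤ 2 * L)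
  calc ‖f' z‖ ^ 2 = 2 * L * (1 / (2 * L) * ‖f' z‖ ^ 2) := by field_simp
  _ ≤ 2 * L * (f z - f xstar) := h8
set_option maxHeartbeats 1600000 in
theorem stmt11
    {n : ℕ} (μ L : ℝ) (hμ : 0 < μ) (hμL : μ ≤ L)
    (f : EuclideanSpace ℝ (Fin n) → ℝ)
    (f' : EuclideanSpace ℝ (Fin n) → EuclideanSpace ℝ (Fin n))
    (hgrad : ∀ z, HasGradientAt f (f' z) z)
    (hLip : ∀ z w, ‖f' z - f' w‖ ≤ L * ‖z - w‖)
    (hsc : ∀ z w, f w ≥ f z + ⟪f' z, w - z⟫ + μ / 2 * ‖w - z‖ ^ 2)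
    (xstar : EuclideanSpace ℝ (Fin n)) (hmin : ∀ z, f xstar ≤ f z)
    (s : ℝ) (hs0 : 0 < s) (hs : s ≤ μ / (16 * L ^ 2))
    (x v : ℕ → EuclideanSpace ℝ (Fin n))
    (hv0 : v 0 = -((2 * Real.sqrt s / (1 + Real.sqrt (μ * s))) • f' (x 0)))
    (hx : ∀ k : ℕ, x (k + 1) - x k = Real.sqrt s • v k)
    (hv : ∀ k : ℕ, v (k + 1) - v k = -((2 * Real.sqrt (μ * s)) • v (k + 1))
      - (Real.sqrt s * (1 + Real.sqrt (μ * s))) • f' (x (k + 1)))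
    : ∀ k : ℕ, f (x k) - f xstar ≤
      ((3 + 8 * Real.sqrt (μ * s) + 8 * (μ * s)) * s * L / (1 + Real.sqrt (μ * s)) ^ 2
        + 2 * μ / L + (1 + Real.sqrt (μ * s)) / 2) *
      (L * ‖x 0 - xstar‖ ^ 2) / (1 + Real.sqrt (μ * s) / 4) ^ k := by
  have hL : 0 < L := lt_of_lt_of_le hμ hμL
  set a : ℝ := Real.sqrt (μ * s) with ha_def
  set r : ℝ := Real.sqrt s with hr_def
  set m : ℝ := Real.sqrt μ with hm_def
  have ha0 : 0 ≤ a := Real.sqrt_nonneg _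
  have hr0 : 0 ≤ r := Real.sqrt_nonneg _
  have hm0 : 0 ≤ m := Real.sqrt_nonneg _
  have hr2 : r ^ 2 = s := Real.sq_sqrt hs0.le
  have hm2 : m ^ 2 = μ := Real.sq_sqrt hμ.le
  have ha2 : a ^ 2 = μ * s := Real.sq_sqrt (by positivity)
  have hmr : m * r = a := by rw [ha_def, hr_def, hm_def, ← Real.sqrt_mul hμ.le]
  have hsL2 : 16 * s * L ^ 2 ≤ μ := by
    have := (le_div_iff₀ (by positivity : (0:ℝ) < 16 * L ^ 2)).mp hs
    linarith
  have haq : a ≤ 1 / 4 := by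
    have h1 : μ * (16 * s * L ^ 2) ≤ μ * μ := mul_le_mul_of_nonneg_left hsL2 hμ.le
    have h2 : μ * s * (16 * L ^ 2) ≤ L ^ 2 := by nlinarith only [h1, hμ, hμL]
    have h3 : μ * s ≤ 1 / 16 := by nlinarith only [h2, mul_pos hL hL]
    linarith only [ha2, h3, sq_nonneg (a - 1 / 4)]
  have hsL : s * L ≤ a / 4 := by
    have h6 : ((4 * s * L : ℝ)) ^ 2 ≤ μ * s := by
      nlinarith only [mul_le_mul_of_nonneg_right hsL2 hs0.le]
    have h7 := Real.sqrt_le_sqrt h6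
    rw [Real.sqrt_sq (by positivity), ← ha_def] at h7
    linarith only [h7]

  have h1a : (0:ℝ) < 1 + a := by linarith
  have hp4 : (0:ℝ) < 1 + a / 4 := by linarith
  have hgstar : f' xstar = 0 := grad_min_zero f f' hgrad xstar hmin
  have hD : ∀ z, 0 ≤ f z - f xstar := fun z => sub_nonneg.2 (hmin z)
  have hgl : ∀ z, ‖f' z‖ ^ 2 ≤ 2 * L * (f z - f xstar) :=
    grad_sq_le hL f f' hgrad hLip xstar hmin
  -- Lyapunov function
  set w : ℕ → EuclideanSpace ℝ (Fin n) :=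
    fun k => v k + (2 * m) • (x (k + 1) - xstar) with hw_def
  set En : ℕ → ℝ :=
    fun k => (1 + a) * (f (x k) - f xstar) + ‖v k‖ ^ 2 / 4 + ‖w k‖ ^ 2 / 4 with hEn_def
  have hEnlb : ∀ k, f (x k) - f xstar ≤ En k := by
    intro k
    have h1 := hD (x k)
    have h2 : (0:ℝ) ≤ ‖v k‖ ^ 2 := sq_nonneg _
    have h3 : (0:ℝ) ≤ ‖w k‖ ^ 2 := sq_nonneg _
    simp only [hEn_def]
    linarith only [mul_nonneg ha0 h1, h1, h2, h3]
  have hEnpos : ∀ k, 0 ≤ En k := fun k => le_trans (hD (x k)) (hEnlb k)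
  -- the key one-step decrease
  have hstep : ∀ k, (1 + a / 4) * En (k + 1) ≤ En k := by
    intro k
    set g : EuclideanSpace ℝ (Fin n) := f' (x (k + 1)) with hg_def
    set V : EuclideanSpace ℝ (Fin n) := v (k + 1) with hV_def
    set V0 : EuclideanSpace ℝ (Fin n) := v k with hV0_def
    set X : EuclideanSpace ℝ (Fin n) := x (k + 1) - xstar with hX_def
    have hF2 : V - V0 = -((2 * a) • V) - (r * (1 + a)) • g := hv k
    have hxk : x (k + 1) - x k = r • V0 := hx k
    have hxk2 : x (k + 1 + 1) - x (k + 1) = r • V := hx (k + 1)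
    have e1 : x (k + 1 + 1) - xstar = r • V + X := by
      rw [← hxk2, hX_def]; abel
    have hma : 2 * m * r = 2 * a := by rw [mul_assoc, hmr]
    have hW1 : w (k + 1) = (1 + 2 * a) • V + (2 * m) • X := by
      show V + (2 * m) • (x (k + 1 + 1) - xstar) = _
      rw [e1, smul_add, smul_smul, hma]
      module
    have hWd : w (k + 1) - w k = -((r * (1 + a)) • g) := by
      have e4 : w (k + 1) - w k = (V - V0) + (2 * m) • (r • V) := by
        show (V + (2 * m) • (x (k + 1 + 1) - xstar)) - (V0 + (2 * m) • (x (k + 1) - xstar)) = _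
        rw [e1]
        module
      rw [e4, hF2, smul_smul, hma]
      module
    have hV0e : V0 = (1 + 2 * a) • V + (r * (1 + a)) • g := by
      have e6 : V0 = V - (V - V0) := by abel
      rw [e6, hF2]
      module
    -- inner product identities
    have iVV : ⟪V, V - V0⟫ = -(2 * a) * ‖V‖ ^ 2 - r * (1 + a) * ⟪g, V⟫ := by
      rw [hF2, inner_sub_right, inner_neg_right, real_inner_smul_right,
        real_inner_smul_right, real_inner_self_eq_norm_sq, real_inner_comm V g]
      ring
    have iNorm1 : ‖V0‖ ^ 2 = ‖V‖ ^ 2 - 2 * ⟪V, V - V0⟫ + ‖V - V0‖ ^ 2 := by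
      have e7 : V - (V - V0) = V0 := by abel
      have h := norm_sub_sq_real V (V - V0)
      rwa [e7] at h
    have iW : ‖w k‖ ^ 2 = ‖w (k + 1)‖ ^ 2 - 2 * ⟪w (k + 1), w (k + 1) - w k⟫
        + ‖w (k + 1) - w k‖ ^ 2 := by
      have e8 : w (k + 1) - (w (k + 1) - w k) = w k := by abel
      have h := norm_sub_sq_real (w (k + 1)) (w (k + 1) - w k)
      rwa [e8] at h
    have iWinner : ⟪w (k + 1), w (k + 1) - w k⟫
        = -(r * (1 + a) * (1 + 2 * a)) * ⟪g, V⟫ - 2 * a * (1 + a) * ⟪g, X⟫ := by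
      rw [hWd, hW1, inner_neg_right, inner_add_left, real_inner_smul_left,
        real_inner_smul_left, real_inner_smul_right, real_inner_smul_right,
        real_inner_comm V g, real_inner_comm X g]
      linear_combination (-2 * (1 + a) * (⟪g, X⟫ : ℝ)) * hmr
        + (2 * a * r * m - 2 * a - 2 * a ^ 2 + 2 * r * m) * (real_inner_comm X g)
    have iWn : ‖w (k + 1) - w k‖ ^ 2 = s * (1 + a) ^ 2 * ‖g‖ ^ 2 := by
      rw [hWd, norm_neg, norm_smul, mul_pow, Real.norm_eq_abs, sq_abs]
      linear_combination ((1 + a) ^ 2 * ‖g‖ ^ 2) * hr2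
    have iGV0 : ⟪g, V0⟫ = (1 + 2 * a) * ⟪g, V⟫ + r * (1 + a) * ‖g‖ ^ 2 := by
      rw [hV0e, inner_add_right, real_inner_smul_right, real_inner_smul_right,
        real_inner_self_eq_norm_sq]
    have hI1 : f (x (k + 1)) - f (x k) ≤ r * ⟪g, V0⟫ - μ * s / 2 * ‖V0‖ ^ 2 := by
      have h := hsc (x (k + 1)) (x k)
      have e9 : x k - x (k + 1) = -(r • V0) := by rw [← hxk]; abel
      rw [e9, inner_neg_right, real_inner_smul_right, norm_neg, norm_smul,
        Real.norm_eq_abs, abs_of_nonneg hr0, mul_pow, hr2] at h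
      linarith only [h]
    have hI2 : (f (x (k + 1)) - f xstar) + μ / 2 * ‖X‖ ^ 2 ≤ ⟪g, X⟫ := by
      have h := hsc (x (k + 1)) xstar
      have e10 : xstar - x (k + 1) = -X := by rw [hX_def]; abel
      rw [e10, inner_neg_right, norm_neg] at h
      linarith only [h]
    have hgl1 : ‖g‖ ^ 2 ≤ 2 * L * (f (x (k + 1)) - f xstar) := hgl (x (k + 1))
    have hD1 : 0 ≤ f (x (k + 1)) - f xstar := hD _
    have hCau : ⟪g, V⟫ ≤ ‖g‖ * ‖V‖ := real_inner_le_norm g V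
    have hW1n : ‖w (k + 1)‖ ^ 2 ≤ 2 * (1 + 2 * a) ^ 2 * ‖V‖ ^ 2 + 8 * μ * ‖X‖ ^ 2 := by
      rw [hW1]
      have h := sq_norm_add_le' ((1 + 2 * a) • V) ((2 * m) • X)
      have e11 : ‖(1 + 2 * a) • V‖ ^ 2 = (1 + 2 * a) ^ 2 * ‖V‖ ^ 2 := by
        rw [norm_smul, mul_pow, Real.norm_eq_abs, sq_abs]
      have e12 : ‖(2 * m) • X‖ ^ 2 = 4 * μ * ‖X‖ ^ 2 := by
        rw [norm_smul, mul_pow, Real.norm_eq_abs, sq_abs]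
        linear_combination (4 * ‖X‖ ^ 2) * hm2
      rw [e11, e12] at h
      linarith only [h]
    -- scalar assembly
    have hA : ‖V‖ ^ 2 / 4 ≤ ‖V0‖ ^ 2 / 4 - a * ‖V‖ ^ 2 - (r * (1 + a) / 2) * ⟪g, V⟫ := by
      linarith only [iNorm1, iVV, sq_nonneg ‖V - V0‖]
    have hB : ‖w (k + 1)‖ ^ 2 / 4 ≤ ‖w k‖ ^ 2 / 4 - (r * (1 + a) * (1 + 2 * a) / 2) * ⟪g, V⟫
        - a * (1 + a) * ⟪g, X⟫ - (s * (1 + a) ^ 2 / 4) * ‖g‖ ^ 2 := by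
      linarith only [iW, iWinner, iWn]
    have hC : (1 + a) * (f (x (k + 1)) - f xstar) ≤ (1 + a) * (f (x k) - f xstar)
        + r * (1 + 2 * a) * (1 + a) * ⟪g, V⟫ + s * (1 + a) ^ 2 * ‖g‖ ^ 2
        - (1 + a) * (μ * s / 2) * ‖V0‖ ^ 2 := by
      have hI1' : f (x (k + 1)) - f (x k)
          ≤ r * (1 + 2 * a) * ⟪g, V⟫ + s * (1 + a) * ‖g‖ ^ 2 - μ * s / 2 * ‖V0‖ ^ 2 := by
        have h := hI1
        rw [iGV0] at h
        have e13 : r * ((1 + 2 * a) * ⟪g, V⟫ + r * (1 + a) * ‖g‖ ^ 2)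
            = r * (1 + 2 * a) * ⟪g, V⟫ + s * (1 + a) * ‖g‖ ^ 2 := by
          linear_combination ((1 + a) * ‖g‖ ^ 2) * hr2
        linarith only [h, e13]
      have h := mul_le_mul_of_nonneg_left hI1' h1a.le
      linarith only [h]
    have hdrop : (0:ℝ) ≤ (1 + a) * (μ * s / 2) * ‖V0‖ ^ 2 := by positivity
    have t0 : r * ⟪g, V⟫ ≤ (s * ‖g‖ ^ 2 + ‖V‖ ^ 2) / 2 := by
      have e14 : r ^ 2 * ‖g‖ ^ 2 = s * ‖g‖ ^ 2 := by rw [hr2]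
      linarith only [e14, sq_nonneg (r * ‖g‖ - ‖V‖), mul_le_mul_of_nonneg_left hCau hr0]
    have T1' := mul_le_mul_of_nonneg_left t0 (by positivity : (0:ℝ) ≤ a * (1 + a))
    have T2 := mul_le_mul_of_nonneg_left hI2 (by positivity : (0:ℝ) ≤ a * (1 + a))
    have T3 := mul_le_mul_of_nonneg_left hW1n (by positivity : (0:ℝ) ≤ a / 16)
    have T4 : s * ‖g‖ ^ 2 ≤ a / 2 * (f (x (k + 1)) - f xstar) := by
      have u1 := mul_le_mul_of_nonneg_left hgl1 hs0.le
      have u3 := mul_le_mul_of_nonneg_right hsL hD1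
      linarith only [u1, u3]
    have T4' : (3 / 4 * (1 + a) ^ 2 + a * (1 + a) / 2) * (s * ‖g‖ ^ 2)
        ≤ 3 / 4 * a * (1 + a) * (f (x (k + 1)) - f xstar) := by
      have u5 := mul_le_mul_of_nonneg_left T4
        (by positivity : (0:ℝ) ≤ 3 / 4 * (1 + a) ^ 2 + a * (1 + a) / 2)
      have u6 : (3 / 4 * (1 + a) ^ 2 + a * (1 + a) / 2) * (a / 2 * (f (x (k + 1)) - f xstar))
          ≤ 3 / 4 * a * (1 + a) * (f (x (k + 1)) - f xstar) := by
        nlinarith only [mul_nonneg (mul_nonneg (mul_nonneg ha0 hD1)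
          (by linarith only [haq] : (0:ℝ) ≤ 3 - 5 * a)) h1a.le]
      linarith
    have T5 : a * (1 + a) / 2 * ‖V‖ ^ 2 + a / 16 * ‖V‖ ^ 2 + a / 8 * (1 + 2 * a) ^ 2 * ‖V‖ ^ 2
        ≤ a * ‖V‖ ^ 2 := by
      have u7 : (0:ℝ) ≤ 5 / 16 - a - a ^ 2 / 2 := by nlinarith only [haq, ha0]
      nlinarith only [mul_nonneg (mul_nonneg ha0 (sq_nonneg ‖V‖)) u7]
    have T6 : a * (μ / 2) * ‖X‖ ^ 2 ≤ a * (1 + a) * (μ / 2) * ‖X‖ ^ 2 := by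
      nlinarith only [mul_nonneg (mul_nonneg (mul_nonneg ha0 ha0) hμ.le) (sq_nonneg ‖X‖)]
    have hSum : (1 + a) * (f (x (k + 1)) - f xstar) + ‖V‖ ^ 2 / 4 + ‖w (k + 1)‖ ^ 2 / 4
        ≤ ((1 + a) * (f (x k) - f xstar) + ‖V0‖ ^ 2 / 4 + ‖w k‖ ^ 2 / 4)
          + (r * a * (1 + a)) * ⟪g, V⟫ + (3 / 4 * s * (1 + a) ^ 2) * ‖g‖ ^ 2
          - a * ‖V‖ ^ 2 - a * (1 + a) * ⟪g, X⟫ := by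
      linarith only [hA, hB, hC, hdrop]
    have hRem : (a / 4) * ((1 + a) * (f (x (k + 1)) - f xstar) + ‖V‖ ^ 2 / 4
          + ‖w (k + 1)‖ ^ 2 / 4)
        + (r * a * (1 + a)) * ⟪g, V⟫ + (3 / 4 * s * (1 + a) ^ 2) * ‖g‖ ^ 2
        - a * ‖V‖ ^ 2 - a * (1 + a) * ⟪g, X⟫ ≤ 0 := by
      linarith only [T1', T2, T3, T4', T5, T6]
    simp only [hEn_def]
    linarith only [hSum, hRem]
  -- initial bound
  have hE0 : En 0 ≤ ((3 + 8 * a + 8 * (μ * s)) * s * L / (1 + a) ^ 2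
      + 2 * μ / L + (1 + a) / 2) * (L * ‖x 0 - xstar‖ ^ 2) := by
    have hN0 : (0:ℝ) ≤ ‖x 0 - xstar‖ ^ 2 := sq_nonneg _
    have hfx0 : f (x 0) - f xstar ≤ L / 2 * ‖x 0 - xstar‖ ^ 2 := by
      have h1 := descent_lemma hL.le f f' hgrad hLip xstar (x 0)
      rw [hgstar] at h1
      simp only [inner_zero_left] at h1
      linarith only [h1]
    have hg0 : ‖f' (x 0)‖ ≤ L * ‖x 0 - xstar‖ := by
      have h1 := hLip (x 0) xstar
      rwa [hgstar, sub_zero] at h1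
    have hgsq : ‖f' (x 0)‖ ^ 2 ≤ L ^ 2 * ‖x 0 - xstar‖ ^ 2 := by
      have h2 := pow_le_pow_left₀ (norm_nonneg (f' (x 0))) hg0 2
      rw [mul_pow] at h2
      exact h2
    have hv0n : ‖v 0‖ ^ 2 = (2 * r / (1 + a)) ^ 2 * ‖f' (x 0)‖ ^ 2 := by
      rw [hv0, norm_neg, norm_smul, mul_pow, Real.norm_eq_abs, sq_abs]
    have hv0b : ‖v 0‖ ^ 2 * (1 + a) ^ 2 ≤ 4 * s * L ^ 2 * ‖x 0 - xstar‖ ^ 2 := by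
      rw [hv0n]
      have h2 : (2 * r / (1 + a)) ^ 2 * (1 + a) ^ 2 = 4 * s := by
        rw [div_pow, div_mul_cancel₀ _ (by positivity : ((1:ℝ) + a) ^ 2 ≠ 0)]
        linear_combination 4 * hr2
      calc (2 * r / (1 + a)) ^ 2 * ‖f' (x 0)‖ ^ 2 * (1 + a) ^ 2
          = ((2 * r / (1 + a)) ^ 2 * (1 + a) ^ 2) * ‖f' (x 0)‖ ^ 2 := by ring
        _ = 4 * s * ‖f' (x 0)‖ ^ 2 := by rw [h2]
        _ ≤ 4 * s * (L ^ 2 * ‖x 0 - xstar‖ ^ 2) :=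
            mul_le_mul_of_nonneg_left hgsq (by positivity)
        _ = 4 * s * L ^ 2 * ‖x 0 - xstar‖ ^ 2 := by ring
    have e1 : x (0 + 1) - xstar = r • v 0 + (x 0 - xstar) := by
      rw [← hx 0]; abel
    have hw0 : w 0 = (1 + 2 * a) • v 0 + (2 * m) • (x 0 - xstar) := by
      show v 0 + (2 * m) • (x (0 + 1) - xstar) = _
      rw [e1, ← hmr]
      module
    have e2 : ‖(1 + 2 * a) • v 0‖ ^ 2 = (1 + 2 * a) ^ 2 * ‖v 0‖ ^ 2 := by
      rw [norm_smul, mul_pow, Real.norm_eq_abs, sq_abs]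
    have e3 : ‖(2 * m) • (x 0 - xstar)‖ ^ 2 = 4 * μ * ‖x 0 - xstar‖ ^ 2 := by
      rw [norm_smul, mul_pow, Real.norm_eq_abs, sq_abs]
      linear_combination (4 * ‖x 0 - xstar‖ ^ 2) * hm2
    have hw0b : ‖w 0‖ ^ 2 ≤ 2 * (1 + 2 * a) ^ 2 * ‖v 0‖ ^ 2 + 8 * μ * ‖x 0 - xstar‖ ^ 2 := by
      rw [hw0]
      have h3 := sq_norm_add_le' ((1 + 2 * a) • v 0) ((2 * m) • (x 0 - xstar))
      rw [e2, e3] at h3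
      linarith
    have hmain : (1 / 4 + (1 + 2 * a) ^ 2 / 2) * ‖v 0‖ ^ 2
        ≤ (3 + 8 * a + 8 * (μ * s)) * s * L / (1 + a) ^ 2 * (L * ‖x 0 - xstar‖ ^ 2) := by
      rw [div_mul_eq_mul_div, le_div_iff₀ (by positivity : (0:ℝ) < (1 + a) ^ 2)]
      calc (1 / 4 + (1 + 2 * a) ^ 2 / 2) * ‖v 0‖ ^ 2 * (1 + a) ^ 2
          = (1 / 4 + (1 + 2 * a) ^ 2 / 2) * (‖v 0‖ ^ 2 * (1 + a) ^ 2) := by ring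
        _ ≤ (1 / 4 + (1 + 2 * a) ^ 2 / 2) * (4 * s * L ^ 2 * ‖x 0 - xstar‖ ^ 2) :=
            mul_le_mul_of_nonneg_left hv0b (by positivity)
        _ = (3 + 8 * a + 8 * (μ * s)) * s * L * (L * ‖x 0 - xstar‖ ^ 2) := by
            linear_combination (8 * s * L ^ 2 * ‖x 0 - xstar‖ ^ 2) * ha2
    have hT2 : 2 * μ / L * (L * ‖x 0 - xstar‖ ^ 2) = 2 * μ * ‖x 0 - xstar‖ ^ 2 := by
      field_simp
    have hD0 : (1 + a) * (f (x 0) - f xstar) ≤ (1 + a) / 2 * (L * ‖x 0 - xstar‖ ^ 2) := by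
      linarith only [mul_le_mul_of_nonneg_left hfx0 h1a.le]
    simp only [hEn_def]
    linarith only [hmain, hw0b, hD0, hT2, sq_nonneg ‖v 0‖]
  -- iterate
  have hiter : ∀ k, En k * (1 + a / 4) ^ k ≤ En 0 := by
    intro k
    induction k with
    | zero => simp
    | succ k ih =>
      have h1 : En (k + 1) * (1 + a / 4) ^ (k + 1)
          = ((1 + a / 4) * En (k + 1)) * (1 + a / 4) ^ k := by ring
      rw [h1]
      calc ((1 + a / 4) * En (k + 1)) * (1 + a / 4) ^ k
          ≤ En k * (1 + a / 4) ^ k :=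
            mul_le_mul_of_nonneg_right (hstep k) (pow_nonneg hp4.le k)
        _ ≤ En 0 := ih
  intro k
  have h1 : (f (x k) - f xstar) * (1 + a / 4) ^ k
      ≤ ((3 + 8 * a + 8 * (μ * s)) * s * L / (1 + a) ^ 2
        + 2 * μ / L + (1 + a) / 2) * (L * ‖x 0 - xstar‖ ^ 2) := by
    calc (f (x k) - f xstar) * (1 + a / 4) ^ k
        ≤ En k * (1 + a / 4) ^ k :=
          mul_le_mul_of_nonneg_right (hEnlb k) (pow_nonneg hp4.le k)
      _ ≤ En 0 := hiter k
      _ ≤ _ := hE0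
  exact (le_div_iff₀ (pow_pos hp4 k)).mpr h1
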